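/- Let (X, d) be a metric space, θ = (k_r) a lacunary sequence, 0 < β ≤ 1 and 0 < p < ∞. If limsup_r k_r / k_{r−1}^β < ∞ and (x_k) is strongly N_θ(p)-summable (order 1) to x₀, i.e., τ_r := (1/h_r) Σ_{k ∈ I_r} d(x_k, x₀)^p → 0, then (x_k) is strongly p-Cesàro summable of order β to x₀: (1/t^β) Σ_{k=1}^t d(x_k, x₀)^p → 0 as t → ∞. -/

import Mathlib

open Filter Finset

/-- If limsup_r k_{r+1}/k_r^β < ∞ (expressed as eventual boundedness) and
(x_k) is strongly N_θ(p)-summable (order 1) to x₀, then (x_k) is strongly p-Cesàro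
summable of order β to x₀. -/
theorem stmt_10 {X : Type*} [MetricSpace X]
    (k : ℕ → ℕ) (hk : StrictMono k) (hk0 : k 0 = 0)
    (hh : Tendsto (fun r => ((k (r + 1) - k r : ℕ) : ℝ)) atTop atTop)
    (β p : ℝ) (hβ0 : 0 < β) (hβ1 : β ≤ 1) (hp : 0 < p)
    (hbd : ∃ M : ℝ, ∀ᶠ r in atTop, ((k (r + 1) : ℕ) : ℝ) / ((k r : ℕ) : ℝ) ^ β ≤ M)
    (x : ℕ → X) (x₀ : X)
    (hx : Tendsto (fun r =>
      (1 / ((k (r + 1) - k r : ℕ) : ℝ)) *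
        ∑ i ∈ Finset.Ioc (k r) (k (r + 1)), dist (x i) x₀ ^ p)
      atTop (nhds 0)) :
    Tendsto (fun t : ℕ =>
      (1 / (t : ℝ) ^ β) * ∑ i ∈ Finset.Icc 1 t, dist (x i) x₀ ^ p)
      atTop (nhds 0) := by
  obtain ⟨M, hM⟩ := hbd
  set a : ℕ → ℝ := fun i => dist (x i) x₀ ^ p with ha_def
  have ha : ∀ i, 0 ≤ a i := fun i => Real.rpow_nonneg dist_nonneg p
  set τ : ℕ → ℝ := fun r => (1 / ((k (r + 1) - k r : ℕ) : ℝ)) *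
      ∑ i ∈ Finset.Ioc (k r) (k (r + 1)), a i with hτ_def
  have hτ : Tendsto τ atTop (nhds 0) := hx
  have hkn : ∀ n, n ≤ k n := fun n => hk.le_apply
  have hkmono : ∀ r, k r ≤ k (r + 1) := fun r => (hk (Nat.lt_succ_self r)).le
  have hhpos : ∀ r, (0 : ℝ) < ((k (r + 1) - k r : ℕ) : ℝ) := by
    intro r
    exact_mod_cast Nat.sub_pos_of_lt (hk (Nat.lt_succ_self r))
  have hw : ∀ r, ∑ i ∈ Finset.Ioc (k r) (k (r + 1)), a i
      = ((k (r + 1) - k r : ℕ) : ℝ) * τ r := by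
    intro r
    simp only [hτ_def]
    rw [← mul_assoc, mul_one_div, div_self (hhpos r).ne', one_mul]
  have hτnn : ∀ r, 0 ≤ τ r := by
    intro r
    exact mul_nonneg (by positivity) (Finset.sum_nonneg fun i _ => ha i)
  have hwnn : ∀ r, 0 ≤ ((k (r + 1) - k r : ℕ) : ℝ) * τ r :=
    fun r => mul_nonneg (hhpos r).le (hτnn r)
  -- telescoping
  have htel : ∀ r, ∑ i ∈ Finset.Icc 1 (k r), a i
      = ∑ j ∈ Finset.range r, ((k (j + 1) - k j : ℕ) : ℝ) * τ j := by
    intro r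
    induction r with
    | zero => simp [hk0]
    | succ r ih =>
      rw [Finset.sum_range_succ, ← ih, ← hw r, (by intro b; exact Finset.Icc_add_one_left_eq_Ioc (a := 0) (b := b) : ∀ b : ℕ, Finset.Icc 1 b = Finset.Ioc 0 b), (by intro b; exact Finset.Icc_add_one_left_eq_Ioc (a := 0) (b := b) : ∀ b : ℕ, Finset.Icc 1 b = Finset.Ioc 0 b)]
      exact (Finset.sum_Ioc_consecutive _ (Nat.zero_le _) (hkmono r)).symm
  have hksum : ∀ r, (k r : ℝ) = ∑ j ∈ Finset.range r, ((k (j + 1) - k j : ℕ) : ℝ) := by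
    intro r
    induction r with
    | zero => simp [hk0]
    | succ r ih =>
      rw [Finset.sum_range_succ, ← ih, Nat.cast_sub (hkmono r)]
      ring
  -- the weighted average tends to 0
  have hB : Tendsto (fun r => (∑ j ∈ Finset.range (r + 1),
      ((k (j + 1) - k j : ℕ) : ℝ) * τ j) / (k (r + 1) : ℝ)) atTop (nhds 0) := by
    rw [Metric.tendsto_atTop]
    intro ε hε
    obtain ⟨R₁, hR₁⟩ := (Metric.tendsto_atTop.mp hτ) (ε / 2) (by positivity)
    set C := ∑ j ∈ Finset.range R₁, ((k (j + 1) - k j : ℕ) : ℝ) * τ j with hC_def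
    have hC : 0 ≤ C := Finset.sum_nonneg fun j _ => hwnn j
    obtain ⟨N₂, hN₂⟩ : ∃ N₂ : ℕ, C / ε * 2 < N₂ := exists_nat_gt _
    refine ⟨max R₁ N₂, fun r hr => ?_⟩
    have hrR₁ : R₁ ≤ r := le_trans (le_max_left _ _) hr
    have hrN₂ : N₂ ≤ r := le_trans (le_max_right _ _) hr
    have hKge : ((r : ℝ) + 1) ≤ (k (r + 1) : ℝ) := by exact_mod_cast hkn (r + 1)
    have hKpos : (0 : ℝ) < (k (r + 1) : ℝ) := lt_of_lt_of_le (by positivity) hKge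
    set W := ∑ j ∈ Finset.range (r + 1), ((k (j + 1) - k j : ℕ) : ℝ) * τ j with hW_def
    have hWnn : 0 ≤ W := Finset.sum_nonneg fun j _ => hwnn j
    have hsplit : W = C + ∑ j ∈ Finset.Ico R₁ (r + 1), ((k (j + 1) - k j : ℕ) : ℝ) * τ j := by
      rw [hW_def, hC_def, Finset.sum_range_add_sum_Ico _ (le_trans hrR₁ (Nat.le_succ r))]
    have htail : ∑ j ∈ Finset.Ico R₁ (r + 1), ((k (j + 1) - k j : ℕ) : ℝ) * τ j
        ≤ ε / 2 * (k (r + 1) : ℝ) := by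
      calc ∑ j ∈ Finset.Ico R₁ (r + 1), ((k (j + 1) - k j : ℕ) : ℝ) * τ j
          ≤ ∑ j ∈ Finset.Ico R₁ (r + 1), ((k (j + 1) - k j : ℕ) : ℝ) * (ε / 2) := by
            refine Finset.sum_le_sum fun j hj => ?_
            have hjR : R₁ ≤ j := (Finset.mem_Ico.mp hj).1
            have := hR₁ j hjR
            rw [Real.dist_eq, sub_zero] at this
            exact mul_le_mul_of_nonneg_left
              ((le_abs_self _).trans this.le) (hhpos j).le
        _ = ε / 2 * ∑ j ∈ Finset.Ico R₁ (r + 1), ((k (j + 1) - k j : ℕ) : ℝ) := by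
            rw [Finset.mul_sum]; exact Finset.sum_congr rfl fun j _ => mul_comm _ _
        _ ≤ ε / 2 * ∑ j ∈ Finset.range (r + 1), ((k (j + 1) - k j : ℕ) : ℝ) := by
            refine mul_le_mul_of_nonneg_left ?_ (by positivity)
            refine Finset.sum_le_sum_of_subset_of_nonneg ?_ (fun j _ _ => (hhpos j).le)
            intro j hj
            exact Finset.mem_range.mpr (Finset.mem_Ico.mp hj).2
        _ = ε / 2 * (k (r + 1) : ℝ) := by rw [← hksum]
    have hCK : C / (k (r + 1) : ℝ) < ε / 2 := by
      rw [div_lt_iff₀ hKpos]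
      have h1 : (N₂ : ℝ) ≤ (k (r + 1) : ℝ) := by
        calc (N₂ : ℝ) ≤ (r : ℝ) := by exact_mod_cast hrN₂
          _ ≤ (r : ℝ) + 1 := by linarith
          _ ≤ _ := hKge
      have h2 : C = C / ε * 2 * (ε / 2) := by field_simp
      calc C = C / ε * 2 * (ε / 2) := h2
        _ < (N₂ : ℝ) * (ε / 2) := by
            exact mul_lt_mul_of_pos_right hN₂ (by positivity)
        _ ≤ (k (r + 1) : ℝ) * (ε / 2) := mul_le_mul_of_nonneg_right h1 (by positivity)
        _ = ε / 2 * (k (r + 1) : ℝ) := mul_comm _ _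
    rw [Real.dist_eq, sub_zero, abs_of_nonneg (div_nonneg hWnn hKpos.le)]
    calc W / (k (r + 1) : ℝ) ≤ (C + ε / 2 * (k (r + 1) : ℝ)) / (k (r + 1) : ℝ) := by
          gcongr
          rw [hsplit]; linarith
      _ = C / (k (r + 1) : ℝ) + ε / 2 := by
          rw [add_div, mul_div_assoc, div_self hKpos.ne', mul_one]
      _ < ε / 2 + ε / 2 := by linarith
      _ = ε := by ring
  -- g r := W r / (k r)^β tends to 0
  have hg : Tendsto (fun r => (∑ j ∈ Finset.range (r + 1),
      ((k (j + 1) - k j : ℕ) : ℝ) * τ j) / ((k r : ℝ) ^ β)) atTop (nhds 0) := by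
    have hbound : Tendsto (fun r => max M 0 * ((∑ j ∈ Finset.range (r + 1),
        ((k (j + 1) - k j : ℕ) : ℝ) * τ j) / (k (r + 1) : ℝ))) atTop (nhds 0) := by
      simpa using hB.const_mul (max M 0)
    refine squeeze_zero' (Eventually.of_forall fun r => ?_) ?_ hbound
    · exact div_nonneg (Finset.sum_nonneg fun j _ => hwnn j) (Real.rpow_nonneg (by positivity) β)
    · filter_upwards [hM, eventually_ge_atTop 1] with r hMr hr1
      set W := ∑ j ∈ Finset.range (r + 1), ((k (j + 1) - k j : ℕ) : ℝ) * τ j with hW_def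
      have hWnn : 0 ≤ W := Finset.sum_nonneg fun j _ => hwnn j
      have hkr : (0 : ℝ) < (k r : ℝ) := by
        exact_mod_cast lt_of_lt_of_le hr1 (hkn r)
      have hkrβ : (0 : ℝ) < (k r : ℝ) ^ β := Real.rpow_pos_of_pos hkr β
      have hK : (0 : ℝ) < (k (r + 1) : ℝ) := by
        have := hkn (r + 1)
        exact_mod_cast lt_of_lt_of_le (Nat.succ_pos r) this
      have key : W / (k r : ℝ) ^ β = ((k (r + 1) : ℝ) / (k r : ℝ) ^ β) * (W / (k (r + 1) : ℝ)) := by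
        field_simp
      rw [key]
      exact mul_le_mul_of_nonneg_right (hMr.trans (le_max_left _ _))
        (div_nonneg hWnn hK.le)
  -- conclude
  rw [Metric.tendsto_atTop]
  intro ε hε
  obtain ⟨R₀, hR₀⟩ := (Metric.tendsto_atTop.mp hg) ε hε
  set R := max R₀ 1 with hR_def
  refine ⟨k R + 1, fun t ht => ?_⟩
  set r := Nat.findGreatest (fun j => k j < t) t with hr_def
  have hPR : k R < t := by omega
  have hRt : R ≤ t := le_trans (hkn R) hPR.le
  have hPr : k r < t := Nat.findGreatest_spec (P := fun j => k j < t) hRt hPR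
  have hRr : R ≤ r := Nat.le_findGreatest (P := fun j => k j < t) hRt hPR
  have hrt : r < t := lt_of_le_of_lt (hkn r) hPr
  have hub : t ≤ k (r + 1) := by
    by_contra hcon
    push_neg at hcon
    exact absurd hcon (Nat.findGreatest_is_greatest (P := fun j => k j < t)
      (Nat.lt_succ_self r) hrt)
  have hkr1 : 1 ≤ k r := le_trans (le_trans (le_max_right _ _) hRr) (hkn r)
  have hkrpos : (0 : ℝ) < (k r : ℝ) ^ β :=
    Real.rpow_pos_of_pos (by exact_mod_cast hkr1) β
  have htpos : (0 : ℝ) < (t : ℝ) ^ β :=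
    Real.rpow_pos_of_pos (by exact_mod_cast lt_of_le_of_lt (Nat.zero_le _) hrt) β
  have hle1 : ∑ i ∈ Finset.Icc 1 t, a i ≤ ∑ i ∈ Finset.Icc 1 (k (r + 1)), a i :=
    Finset.sum_le_sum_of_subset_of_nonneg
      (Finset.Icc_subset_Icc_right hub) (fun i _ _ => ha i)
  have hle2 : (k r : ℝ) ^ β ≤ (t : ℝ) ^ β :=
    Real.rpow_le_rpow (by positivity) (by exact_mod_cast hPr.le) hβ0.le
  have hgr : dist ((∑ j ∈ Finset.range (r + 1),
      ((k (j + 1) - k j : ℕ) : ℝ) * τ j) / ((k r : ℝ) ^ β)) 0 < ε :=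
    hR₀ r (le_trans (le_max_left _ _) hRr)
  rw [Real.dist_eq, sub_zero] at hgr
  have hgnn : 0 ≤ (∑ j ∈ Finset.range (r + 1), ((k (j + 1) - k j : ℕ) : ℝ) * τ j)
      / ((k r : ℝ) ^ β) :=
    div_nonneg (Finset.sum_nonneg fun j _ => hwnn j) hkrpos.le
  rw [abs_of_nonneg hgnn] at hgr
  have hS : 0 ≤ ∑ i ∈ Finset.Icc 1 (k (r + 1)), a i :=
    Finset.sum_nonneg fun i _ => ha i
  have : (1 / (t : ℝ) ^ β) * ∑ i ∈ Finset.Icc 1 t, a i < ε := by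
    calc (1 / (t : ℝ) ^ β) * ∑ i ∈ Finset.Icc 1 t, a i
        = (∑ i ∈ Finset.Icc 1 t, a i) / (t : ℝ) ^ β := by rw [one_div, mul_comm, div_eq_mul_inv]
      _ ≤ (∑ i ∈ Finset.Icc 1 (k (r + 1)), a i) / ((k r : ℝ) ^ β) :=
          div_le_div₀ hS hle1 hkrpos hle2
      _ = (∑ j ∈ Finset.range (r + 1), ((k (j + 1) - k j : ℕ) : ℝ) * τ j)
          / ((k r : ℝ) ^ β) := by rw [htel]
      _ < ε := hgr
  rw [Real.dist_eq, sub_zero]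
  rw [abs_of_nonneg (mul_nonneg (by positivity) (Finset.sum_nonneg fun i _ => ha i))]
  exact this
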